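/- Let r ≥ 2 be a non-square integer, c = 1/√r, α = √r, s = ⌊α⌋, β = α - s, and N(r) = #{1 ≤ j ≤ r-1 : {j/α} < β}. Then 2·∑_{j=1}^{r-1} ⌊jc⌋ = (r-1)(s-1) + N(r). -/

import Mathlib

open Real Finset

lemma pair_floor (α : ℝ) (s : ℤ) (hs : s = ⌊α⌋) (x y : ℝ) (hy : Irrational y)
    (hxy : x + y = α) :
    ⌊x⌋ + ⌊y⌋ = s - 1 + (if Int.fract x < α - s then 1 else 0) := by
  have hβ : α - s = Int.fract α := by rw [hs, Int.self_sub_floor]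
  have hne : Int.fract x ≠ Int.fract α := by
    intro h
    rw [Int.fract_eq_fract] at h
    obtain ⟨z, hz⟩ := h
    exact hy ⟨((-z : ℤ) : ℚ), by push_cast; linarith⟩
  have hfx := Int.fract_add_floor x
  have hfα := Int.fract_add_floor α
  have hy' : y = (s : ℝ) + Int.fract α - ⌊x⌋ - Int.fract x := by
    rw [hs]; push_cast; linarith
  have h0 : (0:ℝ) ≤ Int.fract x := Int.fract_nonneg x
  have h1 : Int.fract x < 1 := Int.fract_lt_one x
  have h0' : (0:ℝ) ≤ Int.fract α := Int.fract_nonneg α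
  have h1' : Int.fract α < 1 := Int.fract_lt_one α
  rw [hβ]
  by_cases hc : Int.fract x < Int.fract α
  · have hfy : ⌊y⌋ = s - ⌊x⌋ := by
      rw [hy']
      have h2 : ((s : ℝ) + Int.fract α - ⌊x⌋ - Int.fract x) = ((s - ⌊x⌋ : ℤ) : ℝ) +
          (Int.fract α - Int.fract x) := by push_cast; ring
      have hz : ⌊Int.fract α - Int.fract x⌋ = 0 :=
        Int.floor_eq_zero_iff.2 ⟨by linarith, by linarith⟩
      rw [h2, Int.floor_intCast_add, hz]
      ring
    rw [if_pos hc, hfy]; ring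
  · have hgt : Int.fract α < Int.fract x := lt_of_le_of_ne (not_lt.1 hc) (Ne.symm hne)
    have hfy : ⌊y⌋ = s - ⌊x⌋ - 1 := by
      rw [hy']
      have h2 : ((s : ℝ) + Int.fract α - ⌊x⌋ - Int.fract x) = ((s - ⌊x⌋ - 1 : ℤ) : ℝ) +
          (1 + Int.fract α - Int.fract x) := by push_cast; ring
      have hz : ⌊1 + Int.fract α - Int.fract x⌋ = 0 :=
        Int.floor_eq_zero_iff.2 ⟨by linarith, by linarith⟩
      have h3 : (1:ℝ) + Int.fract α - Int.fract x = 1 + (Int.fract α - Int.fract x) := by ring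
      rw [h2, Int.floor_intCast_add, hz]
      ring
    rw [if_neg hc, hfy]; ring

theorem stmt4 (r : ℕ) (hr : 2 ≤ r) (hns : ¬ IsSquare r)
    (s : ℤ) (hs : s = ⌊Real.sqrt r⌋)
    (β : ℝ) (hβ : β = Real.sqrt r - s)
    (N : ℕ)
    (hN : N = ((Finset.Icc 1 (r - 1)).filter
      (fun j : ℕ => Int.fract ((j : ℝ) / Real.sqrt r) < β)).card) :
    2 * ∑ j ∈ Finset.Icc 1 (r - 1), ⌊(j : ℝ) * (1 / Real.sqrt r)⌋
      = ((r : ℤ) - 1) * (s - 1) + N := by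
  set α := Real.sqrt r with hα
  have hirr : Irrational α := irrational_sqrt_natCast_iff.2 hns
  have hαpos : 0 < α := Real.sqrt_pos.2 (by positivity)
  have hsq : α * α = r := Real.mul_self_sqrt (by positivity)
  have hrefl : ∑ j ∈ Finset.Icc 1 (r - 1), ⌊(j : ℝ) * (1 / α)⌋
      = ∑ j ∈ Finset.Icc 1 (r - 1), ⌊((r - j : ℕ) : ℝ) * (1 / α)⌋ := by
    apply Finset.sum_nbij' (fun j => r - j) (fun j => r - j)
    · intro a ha; simp only [Finset.mem_Icc] at ha ⊢; omega
    · intro a ha; simp only [Finset.mem_Icc] at ha ⊢; omega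
    · intro a ha; simp only [Finset.mem_Icc] at ha; omega
    · intro a ha; simp only [Finset.mem_Icc] at ha; omega
    · intro a ha; simp only [Finset.mem_Icc] at ha
      congr 3
      omega
  have key : ∀ j ∈ Finset.Icc 1 (r - 1),
      ⌊(j : ℝ) * (1 / α)⌋ + ⌊((r - j : ℕ) : ℝ) * (1 / α)⌋
        = s - 1 + (if Int.fract ((j : ℝ) / α) < β then 1 else 0) := by
    intro j hj
    simp only [Finset.mem_Icc] at hj
    have hjr : j ≤ r := by omega
    have hrj : (((r - j : ℕ)) : ℝ) = (r : ℝ) - j := by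
      push_cast [Nat.cast_sub hjr]; ring
    have hy : Irrational ((((r - j : ℕ)) : ℝ) * (1 / α)) := by
      have hinv : Irrational ((1:ℝ) / α) := by simpa using hirr.inv
      exact hinv.natCast_mul (by omega)
    have hxy : (j : ℝ) * (1 / α) + ((r - j : ℕ) : ℝ) * (1 / α) = α := by
      rw [hrj]
      field_simp
      linarith [hsq]
    have hp := pair_floor α s hs ((j : ℝ) * (1 / α)) (((r - j : ℕ)) * (1 / α)) hy hxy
    rw [hp, hβ, mul_one_div]
  have hsum := Finset.sum_congr rfl key
  have hcard : (∑ j ∈ Finset.Icc 1 (r - 1),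
      (if Int.fract ((j : ℝ) / α) < β then (1:ℤ) else 0)) = (N : ℤ) := by
    rw [hN]
    simp [Finset.sum_boole]
  have hIcc : (Finset.Icc 1 (r - 1)).card = r - 1 := by
    rw [Nat.card_Icc]; omega
  calc 2 * ∑ j ∈ Finset.Icc 1 (r - 1), ⌊(j : ℝ) * (1 / α)⌋
      = ∑ j ∈ Finset.Icc 1 (r - 1), ⌊(j : ℝ) * (1 / α)⌋
        + ∑ j ∈ Finset.Icc 1 (r - 1), ⌊((r - j : ℕ) : ℝ) * (1 / α)⌋ := by
        rw [← hrefl]; ring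
    _ = ∑ j ∈ Finset.Icc 1 (r - 1),
          (⌊(j : ℝ) * (1 / α)⌋ + ⌊((r - j : ℕ) : ℝ) * (1 / α)⌋) := by
        rw [Finset.sum_add_distrib]
    _ = ∑ j ∈ Finset.Icc 1 (r - 1),
          (s - 1 + (if Int.fract ((j : ℝ) / α) < β then (1:ℤ) else 0)) := hsum
    _ = ((r : ℤ) - 1) * (s - 1) + N := by
        rw [Finset.sum_add_distrib, Finset.sum_const, hcard, hIcc]
        have : ((r - 1 : ℕ) : ℤ) = (r : ℤ) - 1 := by omega
        rw [nsmul_eq_mul, this]
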